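/- (OMP single-step gain.) Let l : ℝ^p → ℝ be differentiable, let S ⊆ {1,…,p} with |S| = i, and suppose l is M̃-smooth on Ω̃_{i+1} with M̃ > 0. Let s be a coordinate maximizing |(∇l(β^{(S)}))_j| over all j ∈ {1,…,p}. Then l(β^{(S∪{s})}) − l(β^{(S)}) ≥ (1/(2M̃)) · ‖∇l(β^{(S)})‖_∞². -/

import Mathlib

open Finset

noncomputable section

/-- Number of nonzero coordinates (the "ℓ₀ norm") of a vector. -/
def spar {p : ℕ} (v : Fin p → ℝ) : ℕ := (Finset.univ.filter fun i => v i ≠ 0).card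

/-- Support of a vector, as a `Finset`. -/
def suppF {p : ℕ} (v : Fin p → ℝ) : Finset (Fin p) :=
  Finset.univ.filter fun i => v i ≠ 0

/-- `Ω_k`: pairs of `k`-sparse vectors differing in at most `k` coordinates. -/
def Omega {p : ℕ} (k : ℕ) : Set ((Fin p → ℝ) × (Fin p → ℝ)) :=
  {q | spar q.1 ≤ k ∧ spar q.2 ≤ k ∧ spar (q.1 - q.2) ≤ k}

/-- `Ω̃_k`: pairs of `k`-sparse vectors differing in at most one coordinate. -/
def OmegaT {p : ℕ} (k : ℕ) : Set ((Fin p → ℝ) × (Fin p → ℝ)) :=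
  {q | spar q.1 ≤ k ∧ spar q.2 ≤ k ∧ spar (q.1 - q.2) ≤ 1}

/-- `l` is `m`-strongly concave on `Ω`. -/
def RStrongConcaveOn {p : ℕ} (l : (Fin p → ℝ) → ℝ) (m : ℝ)
    (Ω : Set ((Fin p → ℝ) × (Fin p → ℝ))) : Prop :=
  ∀ x y : Fin p → ℝ, (x, y) ∈ Ω →
    l y - l x - fderiv ℝ l x (y - x) ≤ -(m / 2) * ∑ i, (y i - x i) ^ 2

/-- `l` is `M`-smooth on `Ω`. -/
def RSmoothOn {p : ℕ} (l : (Fin p → ℝ) → ℝ) (M : ℝ)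
    (Ω : Set ((Fin p → ℝ) × (Fin p → ℝ))) : Prop :=
  ∀ x y : Fin p → ℝ, (x, y) ∈ Ω →
    -(M / 2) * ∑ i, (y i - x i) ^ 2 ≤ l y - l x - fderiv ℝ l x (y - x)

/-- OMP single-step gain. -/
theorem omp_single_step_gain
    (p : ℕ) (l : (Fin p → ℝ) → ℝ) (hl : Differentiable ℝ l)
    (β : Finset (Fin p) → (Fin p → ℝ))
    (hβsupp : ∀ S : Finset (Fin p), suppF (β S) ⊆ S)
    (hβmax : ∀ S : Finset (Fin p), ∀ v : Fin p → ℝ, suppF v ⊆ S → l v ≤ l (β S))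
    (S : Finset (Fin p)) (i : ℕ) (hScard : S.card = i)
    (M : ℝ) (hM : 0 < M)
    (hsmooth : RSmoothOn l M (OmegaT (i + 1)))
    (s : Fin p)
    (hs : ∀ j : Fin p, |fderiv ℝ l (β S) (Pi.single j 1)| ≤
      |fderiv ℝ l (β S) (Pi.single s 1)|) :
    1 / (2 * M) * (⨆ j : Fin p, |fderiv ℝ l (β S) (Pi.single j 1)|) ^ 2 ≤
      l (β (insert s S)) - l (β S) := by
  classical
  set g := fderiv ℝ l (β S) (Pi.single s 1) with hg
  set c := g / M with hc
  set e : Fin p → ℝ := Pi.single s 1 with he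
  set y : Fin p → ℝ := β S + c • e with hy
  haveI : Nonempty (Fin p) := ⟨s⟩
  -- membership in OmegaT
  have hsuppy : suppF y ⊆ insert s S := by
    intro j hj
    simp only [suppF, Finset.mem_filter, Finset.mem_univ, true_and] at hj
    by_cases hjs : j = s
    · exact Finset.mem_insert.2 (Or.inl hjs)
    · have : y j = β S j := by
        simp [hy, he, Pi.single_apply, hjs]
      refine Finset.mem_insert.2 (Or.inr (hβsupp S ?_))
      simp only [suppF, Finset.mem_filter, Finset.mem_univ, true_and]
      rw [← this]; exact hj
  have hsparβ : spar (β S) ≤ i := by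
    have := Finset.card_le_card (hβsupp S)
    simpa [spar, suppF, hScard] using this
  have hspary : spar y ≤ i + 1 := by
    have h1 := Finset.card_le_card hsuppy
    have h2 : (insert s S).card ≤ S.card + 1 := Finset.card_insert_le _ _
    calc spar y ≤ (insert s S).card := h1
      _ ≤ i + 1 := by omega
  have hdiff : spar (β S - y) ≤ 1 := by
    have hsub : suppF (β S - y) ⊆ {s} := by
      intro j hj
      simp only [suppF, Finset.mem_filter, Finset.mem_univ, true_and] at hj
      by_contra hjs
      simp only [Finset.mem_singleton] at hjs
      apply hj
      simp [hy, he, Pi.single_apply, hjs]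
    have := Finset.card_le_card hsub
    simpa [spar, suppF] using this
  have hmem : ((β S, y) : (Fin p → ℝ) × (Fin p → ℝ)) ∈ OmegaT (i + 1) :=
    ⟨by simpa using hsparβ.trans (Nat.le_succ i), hspary, hdiff⟩
  have hsmo := hsmooth (β S) y hmem
  -- compute the sum
  have hsum : ∑ j, (y j - β S j) ^ 2 = c ^ 2 := by
    have : ∀ j, (y j - β S j) ^ 2 = (c * e j) ^ 2 := by
      intro j; simp [hy]
    rw [Finset.sum_congr rfl fun j _ => this j]
    rw [Fintype.sum_eq_single s]
    · simp [he]
    · intro j hjs; simp [he, Pi.single_apply, hjs]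
  -- compute the derivative term
  have hder : fderiv ℝ l (β S) (y - β S) = c * g := by
    have h0 : y - β S = c • e := by
      simp [hy]
    rw [h0, map_smul, he]
    rfl
  have hkey : g ^ 2 / (2 * M) ≤ l y - l (β S) := by
    rw [hsum, hder] at hsmo
    have hc2 : c * g = g ^ 2 / M := by
      rw [hc]; ring
    have : -(M / 2) * c ^ 2 = -(g ^ 2 / (2 * M)) := by
      rw [hc]; field_simp <;> ring
    have h3 : g ^ 2 / M - g ^ 2 / (2 * M) = g ^ 2 / (2 * M) := by
      field_simp; ring
    linarith
  have hly : l y ≤ l (β (insert s S)) := hβmax _ _ hsuppy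
  -- the sup equals |g|
  have hsup : (⨆ j : Fin p, |fderiv ℝ l (β S) (Pi.single j 1)|) = |g| := by
    apply le_antisymm
    · exact ciSup_le hs
    · exact le_ciSup (f := fun j : Fin p => |fderiv ℝ l (β S) (Pi.single j 1)|) (Finite.bddAbove_range _) s
  rw [hsup]
  have : |g| ^ 2 = g ^ 2 := sq_abs g
  rw [this]
  have h1 : 1 / (2 * M) * g ^ 2 = g ^ 2 / (2 * M) := by ring
  linarith [hkey]
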